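/- arXiv:2502.14096 — 4 statements merged into one kernel-verified Lean document; each statement's English description precedes it below -/
import Mathlib

section
/- Let (r_k)_{k ≥ 0} be a sequence of non-negative real numbers satisfying the recurrence r_{k+1}² ≤ r_k² − α₁ r_k²/(1 + α₂ r_k) for all k, where α₁ ∈ (0, 2) and α₂ ≥ 0. Let k_0 := ⌈4(r_0 α₂ − 1)/α₁⌉. Then for every k ≥ k_0, r_k ≤ r_{k_0}·(1 − α₁/2)^{(k − k_0)/2}, and for every k < k_0, r_k ≤ r_0 − k·α₁/(4α₂). -/
noncomputable section

/-- Recurrence bound (exact AMOO): if `r_{k+1}² ≤ r_k² − α₁ r_k²/(1 + α₂ r_k)` with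
`α₁ ∈ (0,2)` and `α₂ ≥ 0`, then the sequence decreases at least linearly (in `r`) until
iteration `k₀ = ⌈4(r₀α₂ − 1)/α₁⌉`, after which it converges at a linear rate. -/
theorem recurrence_bound_amoo (r : ℕ → ℝ) (α₁ α₂ : ℝ)
    (hα₁ : α₁ ∈ Set.Ioo (0 : ℝ) 2) (hα₂ : 0 ≤ α₂)
    (hr : ∀ k, 0 ≤ r k)
    (hrec : ∀ k, (r (k + 1)) ^ 2 ≤ (r k) ^ 2 - α₁ * (r k) ^ 2 / (1 + α₂ * r k))
    (k₀ : ℕ) (hk₀ : k₀ = (⌈4 * (r 0 * α₂ - 1) / α₁⌉ : ℤ).toNat) :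
    ∀ k : ℕ,
      (k₀ ≤ k → r k ≤ r k₀ * (1 - α₁ / 2) ^ (((k : ℝ) - (k₀ : ℝ)) / 2)) ∧
      (k < k₀ → r k ≤ r 0 - (k : ℝ) * α₁ / (4 * α₂)) := by
  obtain ⟨h1, h2⟩ := hα₁
  have hq0 : (0:ℝ) < 1 - α₁ / 2 := by linarith
  have hden : ∀ k, (0:ℝ) < 1 + α₂ * r k := fun k => by
    have := mul_nonneg hα₂ (hr k); linarith
  have sqle : ∀ a b : ℝ, 0 ≤ a → 0 ≤ b → a^2 ≤ b^2 → a ≤ b := by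
    intro a b ha hb h
    nlinarith [sq_nonneg (a - b), sq_nonneg (a + b)]
  have hmono : ∀ k, r (k+1) ≤ r k := by
    intro k
    have hnn : 0 ≤ α₁ * (r k)^2 / (1 + α₂ * r k) :=
      div_nonneg (mul_nonneg h1.le (sq_nonneg _)) (hden k).le
    exact sqle _ _ (hr _) (hr _) (by linarith [hrec k])
  -- Linear decrease step when α₂ r k ≥ 1
  have stepA : ∀ k, 1 ≤ α₂ * r k → r (k+1) ≤ r k - α₁ / (4*α₂) := by
    intro k hk
    have hα₂pos : 0 < α₂ := by nlinarith [hr k]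
    have hrk : 0 < r k := by nlinarith
    have h3 : α₁ * r k / (2 * α₂) ≤ α₁ * (r k)^2 / (1 + α₂ * r k) := by
      rw [div_le_div_iff₀ (by positivity) (hden k)]
      nlinarith [mul_le_mul_of_nonneg_left (show 1 + α₂ * r k ≤ 2 * (α₂ * r k) by linarith)
        (mul_pos h1 hrk).le]
    have hsq : (r k - α₁/(4*α₂))^2 = (r k)^2 - α₁ * r k/(2*α₂) + (α₁/(4*α₂))^2 := by
      field_simp; ring
    have hpos : 0 ≤ r k - α₁/(4*α₂) := by
      rw [sub_nonneg, div_le_iff₀ (by positivity)]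
      nlinarith
    exact sqle _ _ (hr _) hpos (by nlinarith [hrec k, sq_nonneg (α₁/(4*α₂))])
  -- Geometric decrease step when α₂ r k ≤ 1
  have stepB : ∀ k, α₂ * r k ≤ 1 → r (k+1) ≤ r k * Real.sqrt (1 - α₁/2) := by
    intro k hk
    have h3 : α₁ * (r k)^2 / 2 ≤ α₁ * (r k)^2 / (1 + α₂ * r k) := by
      apply div_le_div_of_nonneg_left (mul_nonneg h1.le (sq_nonneg _)) (hden k)
      linarith
    have hs : (Real.sqrt (1 - α₁/2))^2 = 1 - α₁/2 := Real.sq_sqrt hq0.le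
    have hsq : (r (k+1))^2 ≤ (r k * Real.sqrt (1 - α₁/2))^2 := by
      rw [mul_pow, hs]; nlinarith [hrec k]
    exact sqle _ _ (hr _) (mul_nonneg (hr _) (Real.sqrt_nonneg _)) hsq
  -- positivity of α₂ when k₀ > 0
  have hα₂pos : 0 < k₀ → (1 < r 0 * α₂ ∧ 0 < α₂) := by
    intro hpos
    have hceil : (0:ℤ) < ⌈4 * (r 0 * α₂ - 1) / α₁⌉ := by
      rw [hk₀] at hpos
      exact_mod_cast Int.lt_toNat.mp hpos
    have hx : (0:ℝ) < 4 * (r 0 * α₂ - 1) / α₁ := by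
      have := Int.lt_ceil.mp hceil
      exact_mod_cast this
    have h4 : 0 < 4 * (r 0 * α₂ - 1) := by
      by_contra hc; push_neg at hc
      have : 4 * (r 0 * α₂ - 1) / α₁ ≤ 0 := div_nonpos_of_nonpos_of_nonneg hc h1.le
      linarith
    constructor
    · linarith
    · nlinarith [hr 0]
  -- Phase 1
  have P1 : ∀ k, k < k₀ → r k ≤ r 0 - (k : ℝ) * α₁ / (4 * α₂) := by
    intro k
    induction k with
    | zero => intro _; simp
    | succ n ih =>
      intro hk
      have hn := ih (by omega)
      obtain ⟨hr0α₂, hα₂p⟩ := hα₂pos (by omega)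
      have hlt : ((n:ℝ) + 1) < 4 * (r 0 * α₂ - 1) / α₁ := by
        have h5 : ((n:ℤ) + 1) < ⌈4 * (r 0 * α₂ - 1) / α₁⌉ := by
          have : (n + 1 : ℕ) < (⌈4 * (r 0 * α₂ - 1) / α₁⌉ : ℤ).toNat := hk₀ ▸ hk
          exact_mod_cast Int.lt_toNat.mp this
        exact_mod_cast Int.lt_ceil.mp h5
      have hring : ((n:ℝ) + 1) * α₁ / (4 * α₂) = (n:ℝ) * α₁ / (4 * α₂) + α₁ / (4 * α₂) := by
        ring
      by_cases hc : 1 ≤ α₂ * r n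
      · have := stepA n hc
        push_cast
        rw [hring]
        linarith
      · push_neg at hc
        have hmul : ((n:ℝ) + 1) * α₁ < 4 * (r 0 * α₂ - 1) := by
          have := (lt_div_iff₀ h1).mp hlt
          linarith
        have hgoal : ((n:ℝ) + 1) * α₁ / (4 * α₂) ≤ r 0 - r (n+1) := by
          rw [div_le_iff₀ (by positivity)]
          have h6 : α₂ * r (n+1) ≤ α₂ * r n := mul_le_mul_of_nonneg_left (hmono n) hα₂
          nlinarith
        push_cast
        linarith
  -- α₂ r k₀ ≤ 1
  have hsmall0 : α₂ * r k₀ ≤ 1 := by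
    rcases Nat.eq_zero_or_pos k₀ with h0 | hpos
    · have hle : (⌈4 * (r 0 * α₂ - 1) / α₁⌉ : ℤ) ≤ 0 := by
        rw [hk₀] at h0
        exact Int.toNat_eq_zero.mp h0
      have hx : 4 * (r 0 * α₂ - 1) / α₁ ≤ (0:ℝ) := by
        have := Int.ceil_le.mp hle
        exact_mod_cast this
      have h4 : 4 * (r 0 * α₂ - 1) ≤ 0 := by
        by_contra hc; push_neg at hc
        have : 0 < 4 * (r 0 * α₂ - 1) / α₁ := div_pos hc h1
        linarith
      rw [h0]
      nlinarith
    · obtain ⟨m, hm⟩ : ∃ m, k₀ = m + 1 := ⟨k₀ - 1, (Nat.succ_pred_eq_of_pos hpos).symm⟩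
      obtain ⟨hr0α₂, hα₂p⟩ := hα₂pos hpos
      have hxk : 4 * (r 0 * α₂ - 1) / α₁ ≤ (k₀ : ℝ) := by
        have hc1 : (⌈4 * (r 0 * α₂ - 1) / α₁⌉ : ℤ) ≤ (k₀ : ℤ) := by
          rw [hk₀]; exact Int.self_le_toNat _
        have hc2 : ((⌈4 * (r 0 * α₂ - 1) / α₁⌉ : ℤ) : ℝ) ≤ (k₀ : ℝ) := by exact_mod_cast hc1
        linarith [Int.le_ceil (4 * (r 0 * α₂ - 1) / α₁)]
      have h5 : 4 * (r 0 * α₂ - 1) ≤ ((m:ℝ) + 1) * α₁ := by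
        rw [hm] at hxk; push_cast at hxk
        have := (div_le_iff₀ h1).mp hxk
        linarith
      have hPm := P1 m (by omega)
      rw [hm]
      by_cases hc : 1 ≤ α₂ * r m
      · have hA := stepA m hc
        have hring : ((m:ℝ) + 1) * α₁ / (4 * α₂) = (m:ℝ) * α₁ / (4 * α₂) + α₁ / (4 * α₂) := by
          ring
        have hkey : r (m+1) ≤ r 0 - ((m:ℝ) + 1) * α₁ / (4 * α₂) := by
          rw [hring]; linarith
        have h6 : α₂ * (((m:ℝ) + 1) * α₁ / (4 * α₂)) = ((m:ℝ) + 1) * α₁ / 4 := by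
          field_simp
        nlinarith [mul_le_mul_of_nonneg_left hkey hα₂]
      · push_neg at hc
        have h6 : α₂ * r (m+1) ≤ α₂ * r m := mul_le_mul_of_nonneg_left (hmono m) hα₂
        linarith
  have hsmall : ∀ k, k₀ ≤ k → α₂ * r k ≤ 1 := by
    intro k hk
    induction k, hk using Nat.le_induction with
    | base => exact hsmall0
    | succ n hn ih =>
      calc α₂ * r (n+1) ≤ α₂ * r n := mul_le_mul_of_nonneg_left (hmono n) hα₂
        _ ≤ 1 := ih
  -- Phase 2
  have P2 : ∀ k, k₀ ≤ k → r k ≤ r k₀ * (1 - α₁ / 2) ^ (((k : ℝ) - (k₀ : ℝ)) / 2) := by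
    intro k hk
    induction k, hk using Nat.le_induction with
    | base => simp
    | succ n hn ih =>
      have hB := stepB n (hsmall n hn)
      have hsqrt_eq : Real.sqrt (1 - α₁/2) = (1 - α₁/2) ^ ((1:ℝ)/2) :=
        Real.sqrt_eq_rpow (1 - α₁/2)
      calc r (n+1) ≤ r n * Real.sqrt (1 - α₁/2) := hB
        _ ≤ (r k₀ * (1 - α₁ / 2) ^ (((n : ℝ) - (k₀ : ℝ)) / 2)) * Real.sqrt (1 - α₁/2) :=
            mul_le_mul_of_nonneg_right ih (Real.sqrt_nonneg _)
        _ = r k₀ * (1 - α₁ / 2) ^ ((((n+1 : ℕ) : ℝ) - (k₀ : ℝ)) / 2) := by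
            rw [hsqrt_eq, mul_assoc, ← Real.rpow_add hq0]
            push_cast
            ring_nf
  intro k
  exact ⟨P2 k, P1 k⟩
end
end

section
/- Let (r_k)_{k ≥ 0} be a sequence of non-negative real numbers satisfying the recurrence r_{k+1}² ≤ r_k² − α₁ r_k²/(1 + α₂ r_k) + α₃ + α₄ r_k for all k, where α₁ ∈ (0, 2), α₂ > 0, 0 ≤ α₃ ≤ α₁²/(256 α₂²), and 0 ≤ α₄ ≤ α₁/(4α₂). Let k_0 := ⌈16(r_0 α₂ − 1)/α₁⌉. Then for every k ≥ k_0, r_k ≤ r_{k_0}·(1 − α₁/2)^{(k − k_0)/2} + √(2α₃/α₁ + 2α₄/(α₁ α₂)), and for every k < k_0, r_k ≤ r_0 − k·α₁/(16 α₂). -/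
noncomputable section

set_option maxHeartbeats 800000 in
/-- Recurrence bound (`ε`-AAMOO): if
`r_{k+1}² ≤ r_k² − α₁ r_k²/(1 + α₂ r_k) + α₃ + α₄ r_k` with `α₁ ∈ (0,2)`, `α₂ > 0`,
`0 ≤ α₃ ≤ α₁²/(256 α₂²)` and `0 ≤ α₄ ≤ α₁/(4α₂)`, then the sequence decreases at least
linearly (in `r`) until iteration `k₀ = ⌈16(r₀α₂ − 1)/α₁⌉`, after which it converges at a
linear rate up to an additive error. -/
theorem recurrence_bound_eps_aamoo (r : ℕ → ℝ) (α₁ α₂ α₃ α₄ : ℝ)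
    (hα₁ : α₁ ∈ Set.Ioo (0 : ℝ) 2) (hα₂ : 0 < α₂)
    (hα₃ : 0 ≤ α₃) (hα₃' : α₃ ≤ α₁ ^ 2 / (256 * α₂ ^ 2))
    (hα₄ : 0 ≤ α₄) (hα₄' : α₄ ≤ α₁ / (4 * α₂))
    (hr : ∀ k, 0 ≤ r k)
    (hrec : ∀ k, (r (k + 1)) ^ 2 ≤ (r k) ^ 2 - α₁ * (r k) ^ 2 / (1 + α₂ * r k) + α₃ + α₄ * r k)
    (k₀ : ℕ) (hk₀ : k₀ = (⌈16 * (r 0 * α₂ - 1) / α₁⌉ : ℤ).toNat) :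
    ∀ k : ℕ,
      (k₀ ≤ k → r k ≤ r k₀ * (1 - α₁ / 2) ^ (((k : ℝ) - (k₀ : ℝ)) / 2)
          + Real.sqrt (2 * α₃ / α₁ + 2 * α₄ / (α₁ * α₂))) ∧
      (k < k₀ → r k ≤ r 0 - (k : ℝ) * α₁ / (16 * α₂)) := by
  obtain ⟨hα₁0, hα₁2⟩ := hα₁
  have hα₂0 : (0:ℝ) < 1/α₂ := by positivity
  set A : ℝ := α₁ / (16 * α₂) with hA
  have hA0 : 0 < A := by positivity
  -- Lemma L1 : large regime decrease
  have L1 : ∀ k, 1/α₂ ≤ r k → r (k+1) ≤ r k - A := by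
    intro k hk
    have hrk : 0 < r k := lt_of_lt_of_le hα₂0 hk
    have h2 : 1 ≤ α₂ * r k := by
      rw [div_le_iff₀ hα₂] at hk; linarith
    have h1 : (0:ℝ) < 1 + α₂ * r k := by positivity
    have hge : α₁ * r k / (2 * α₂) ≤ α₁ * (r k)^2 / (1 + α₂ * r k) := by
      rw [div_le_div_iff₀ (by positivity) h1]
      have := mul_le_mul_of_nonneg_left h2 (by positivity : (0:ℝ) ≤ α₁ * r k)
      nlinarith [this]
    have hα₃b : α₃ ≤ α₁ * r k / (128 * α₂) := by
      have h5 : α₁ ^ 2 / (256 * α₂ ^ 2) ≤ α₁ * r k / (128 * α₂) := by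
        rw [div_le_div_iff₀ (by positivity) (by positivity)]
        have ha : α₁ * α₂ ≤ α₁ * α₂ * (α₂ * r k) :=
          le_mul_of_one_le_right (by positivity) h2
        nlinarith [ha, mul_pos hα₁0 hα₂]
      linarith
    have hα₄b : α₄ * r k ≤ α₁ * r k / (4 * α₂) := by
      calc α₄ * r k ≤ α₁ / (4 * α₂) * r k := mul_le_mul_of_nonneg_right hα₄' (hr k)
        _ = α₁ * r k / (4 * α₂) := by ring
    have hkey : (r (k+1))^2 ≤ (r k - A)^2 := by
      have hsq : (r k - A)^2 = (r k)^2 - α₁ * r k / (8*α₂) + A^2 := by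
        rw [hA]; field_simp; ring
      have hu0 : (0:ℝ) ≤ α₁ * r k / α₂ := by positivity
      have e1 : α₁ * r k / (2*α₂) = (α₁ * r k / α₂) * (1/2) := by ring
      have e2 : α₁ * r k / (128*α₂) = (α₁ * r k / α₂) * (1/128) := by ring
      have e3 : α₁ * r k / (4*α₂) = (α₁ * r k / α₂) * (1/4) := by ring
      have e4 : α₁ * r k / (8*α₂) = (α₁ * r k / α₂) * (1/8) := by ring
      have := hrec k
      rw [hsq]
      linarith [sq_nonneg A]
    have hnn : 0 ≤ r k - A := by
      have : A ≤ 1/α₂ := by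
        rw [hA, div_le_div_iff₀ (by positivity) hα₂]
        nlinarith
      linarith
    calc r (k+1) = Real.sqrt ((r (k+1))^2) := (Real.sqrt_sq (hr _)).symm
      _ ≤ Real.sqrt ((r k - A)^2) := Real.sqrt_le_sqrt hkey
      _ = r k - A := Real.sqrt_sq hnn
  -- Lemma L3 : small regime contraction
  set ρ : ℝ := 1 - α₁/2 with hρ
  have hρ0 : 0 < ρ := by rw [hρ]; linarith
  set C : ℝ := α₃ + α₄ / α₂ with hC
  have L3 : ∀ k, r k ≤ 1/α₂ → (r (k+1))^2 ≤ ρ * (r k)^2 + C := by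
    intro k hk
    have h1 : (0:ℝ) < 1 + α₂ * r k := by
      have := mul_nonneg hα₂.le (hr k); linarith
    have h2 : 1 + α₂ * r k ≤ 2 := by
      have h := mul_le_mul_of_nonneg_left hk hα₂.le
      rw [mul_one_div, div_self (ne_of_gt hα₂)] at h
      linarith
    have hge : α₁ * (r k)^2 / 2 ≤ α₁ * (r k)^2 / (1 + α₂ * r k) := by
      rw [div_le_div_iff₀ (by norm_num) h1]
      have := mul_le_mul_of_nonneg_left h2
        (mul_nonneg hα₁0.le (sq_nonneg (r k)))
      linarith [this]
    have hα₄b : α₄ * r k ≤ α₄ / α₂ := by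
      calc α₄ * r k ≤ α₄ * (1/α₂) := mul_le_mul_of_nonneg_left hk hα₄
        _ = α₄ / α₂ := by ring
    have := hrec k
    rw [hρ, hC]; nlinarith
  -- Lemma L2 : small stays small
  have L2 : ∀ k, r k ≤ 1/α₂ → r (k+1) ≤ 1/α₂ := by
    intro k hk
    have h3 := L3 k hk
    have hu0 : (0:ℝ) ≤ α₁ / α₂^2 := by positivity
    have hsq : (r k)^2 ≤ (1/α₂)^2 := pow_le_pow_left₀ (hr k) hk 2
    have hα₃b : α₃ ≤ α₁ / (128 * α₂^2) := by
      have e1 : α₁^2 / (256 * α₂^2) = (α₁/α₂^2) * (α₁/256) := by ring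
      have e2 : α₁ / (128 * α₂^2) = (α₁/α₂^2) * (1/128) := by ring
      have h := mul_le_mul_of_nonneg_left
        (by linarith : α₁/256 ≤ (1:ℝ)/128) hu0
      linarith
    have hα₄b : α₄ / α₂ ≤ α₁ / (4 * α₂^2) := by
      calc α₄ / α₂ = α₄ * (1/α₂) := by ring
        _ ≤ α₁ / (4*α₂) * (1/α₂) := mul_le_mul_of_nonneg_right hα₄' hα₂0.le
        _ = α₁ / (4 * α₂^2) := by ring
    have hmul : ρ * (r k)^2 ≤ ρ * (1/α₂)^2 := mul_le_mul_of_nonneg_left hsq hρ0.le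
    have eρ : ρ * (1/α₂)^2 = (1/α₂)^2 - (α₁/α₂^2) * (1/2) := by rw [hρ]; ring
    have e1 : α₁ / (128 * α₂^2) = (α₁/α₂^2) * (1/128) := by ring
    have e2 : α₁ / (4 * α₂^2) = (α₁/α₂^2) * (1/4) := by ring
    have hb : (r (k+1))^2 ≤ (1/α₂)^2 := by
      rw [hC] at h3; linarith
    calc r (k+1) = Real.sqrt ((r (k+1))^2) := (Real.sqrt_sq (hr _)).symm
      _ ≤ Real.sqrt ((1/α₂)^2) := Real.sqrt_le_sqrt hb
      _ = 1/α₂ := Real.sqrt_sq hα₂0.le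
  -- arithmetic about k₀
  set x : ℝ := 16 * (r 0 * α₂ - 1) / α₁ with hx
  have fact1 : ∀ k : ℕ, k < k₀ → 1/α₂ < r 0 - (k:ℝ) * A := by
    intro k hk
    have hkc : ((k:ℤ)) < ⌈x⌉ := by rw [hk₀] at hk; omega
    have hkr : (k:ℝ) + 1 ≤ (⌈x⌉ : ℝ) := by exact_mod_cast hkc
    have hceil : (⌈x⌉ : ℝ) < x + 1 := Int.ceil_lt_add_one x
    have hkx : (k:ℝ) < x := by linarith
    rw [hx, lt_div_iff₀ hα₁0] at hkx
    rw [hA, div_lt_iff₀ hα₂]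
    have hexp : (r 0 - (k:ℝ) * (α₁/(16*α₂))) * α₂ = r 0 * α₂ - (k:ℝ) * α₁ / 16 := by
      field_simp
    rw [hexp]; linarith
  have fact2 : r 0 - (k₀:ℝ) * A ≤ 1/α₂ := by
    rcases le_or_gt (⌈x⌉ : ℤ) 0 with h | h
    · have hk0 : k₀ = 0 := by rw [hk₀]; omega
      have hxle : 16 * (r 0 * α₂ - 1) ≤ 0 := by
        by_contra hc
        push_neg at hc
        have hx0 : (0:ℝ) < x := by rw [hx]; exact div_pos hc hα₁0
        have : (0:ℤ) < ⌈x⌉ := Int.ceil_pos.mpr hx0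
        omega
      have hr0 : r 0 ≤ 1/α₂ := by
        rw [le_div_iff₀ hα₂]; nlinarith
      rw [hk0]; simpa using hr0
    · have hk0 : ((k₀:ℤ)) = ⌈x⌉ := by rw [hk₀]; omega
      have hxk : x ≤ (k₀:ℝ) := by
        have h2 := Int.le_ceil x
        rw [← hk0] at h2
        exact_mod_cast h2
      have hxA : x * A = r 0 - 1/α₂ := by
        rw [hx, hA]; field_simp
      have h3 := mul_le_mul_of_nonneg_right hxk hA0.le
      linarith [hxA ▸ h3]
  -- Phase 1 invariant
  have S : ∀ k, k ≤ k₀ → (r k ≤ r 0 - (k:ℝ) * A ∨ r k ≤ 1/α₂) := by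
    intro k
    induction k with
    | zero => intro _; left; simp
    | succ n ih =>
      intro hn
      have hn' : n ≤ k₀ := Nat.le_of_succ_le hn
      rcases ih hn' with h | h
      · rcases le_total (1/α₂) (r n) with h2 | h2
        · left
          have h4 := L1 n h2
          push_cast
          linarith
        · right; exact L2 n h2
      · right; exact L2 n h
  have rk₀ : r k₀ ≤ 1/α₂ := by
    rcases S k₀ le_rfl with h | h
    · linarith [fact2]
    · exact h
  -- Phase 2
  set E : ℝ := 2 * α₃ / α₁ + 2 * α₄ / (α₁ * α₂) with hE
  have hE0 : 0 ≤ E := by positivity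
  have Hsmall : ∀ m, r (k₀ + m) ≤ 1/α₂ := by
    intro m
    induction m with
    | zero => simpa using rk₀
    | succ n ih => exact L2 (k₀ + n) ih
  have hEid : ρ * E + C = E := by
    rw [hρ, hC, hE]; field_simp; ring
  have Hsq : ∀ m, (r (k₀ + m))^2 ≤ (r k₀)^2 * ρ^m + E := by
    intro m
    induction m with
    | zero => simp only [Nat.add_zero, pow_zero, mul_one]; linarith
    | succ n ih =>
      have h1 := L3 (k₀ + n) (Hsmall n)
      have h2 : ρ * (r (k₀+n))^2 ≤ ρ * ((r k₀)^2 * ρ^n + E) :=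
        mul_le_mul_of_nonneg_left ih hρ0.le
      have e : ρ * ((r k₀)^2 * ρ^n + E) = (r k₀)^2 * ρ^(n+1) + ρ * E := by
        rw [pow_succ]; ring
      rw [show k₀ + (n+1) = (k₀+n)+1 from rfl]
      linarith
  -- final
  intro k
  constructor
  · intro hk
    set m : ℕ := k - k₀ with hm
    have hkm : k = k₀ + m := by omega
    have hcast : ((k:ℝ) - (k₀:ℝ)) / 2 = (m:ℝ) / 2 := by
      rw [hkm]; push_cast; ring
    rw [hcast]
    have hsqm := Hsq m
    rw [← hkm] at hsqm
    have ha : (0:ℝ) ≤ (r k₀)^2 * ρ^m := by positivity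
    have hadd : Real.sqrt ((r k₀)^2 * ρ^m + E) ≤ Real.sqrt ((r k₀)^2 * ρ^m) + Real.sqrt E := by
      have h4 : (r k₀)^2 * ρ^m + E ≤ (Real.sqrt ((r k₀)^2 * ρ^m) + Real.sqrt E)^2 := by
        nlinarith [Real.sq_sqrt ha, Real.sq_sqrt hE0, Real.sqrt_nonneg ((r k₀)^2 * ρ^m),
          Real.sqrt_nonneg E]
      calc Real.sqrt ((r k₀)^2 * ρ^m + E)
          ≤ Real.sqrt ((Real.sqrt ((r k₀)^2 * ρ^m) + Real.sqrt E)^2) := Real.sqrt_le_sqrt h4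
        _ = _ := Real.sqrt_sq (by positivity)
    have hmulsqrt : Real.sqrt ((r k₀)^2 * ρ^m) = r k₀ * ρ ^ ((m:ℝ)/2) := by
      rw [Real.sqrt_mul (sq_nonneg _), Real.sqrt_sq (hr _)]
      congr 1
      rw [Real.sqrt_eq_rpow, ← Real.rpow_natCast ρ m, ← Real.rpow_mul hρ0.le]
      rw [mul_one_div]
    calc r k = Real.sqrt ((r k)^2) := (Real.sqrt_sq (hr _)).symm
      _ ≤ Real.sqrt ((r k₀)^2 * ρ^m + E) := Real.sqrt_le_sqrt hsqm
      _ ≤ Real.sqrt ((r k₀)^2 * ρ^m) + Real.sqrt E := hadd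
      _ = r k₀ * ρ ^ ((m:ℝ)/2) + Real.sqrt E := by rw [hmulsqrt]
  · intro hk
    have hgoal : (k:ℝ) * α₁ / (16*α₂) = (k:ℝ) * A := by rw [hA]; ring
    rw [hgoal]
    rcases S k (le_of_lt hk) with h | h
    · exact h
    · linarith [fact1 k hk]
end
end

section
/- Let H_1, …, H_m be real symmetric n×n matrices with spectral norm ‖H_i‖₂ ≤ β for every i ∈ [m], and let 0 < w_min ≤ 1/m. Let w⋆ ∈ Δ_m be a maximizer of w ↦ λ_min(Σ_{i=1}^m w_i H_i) over Δ_m, and let ŵ ∈ Δ_{m,w_min} be a maximizer of the same map over Δ_{m,w_min}. Then λ_min(Σ_{i=1}^m ŵ_i H_i) ≥ λ_min(Σ_{i=1}^m w⋆_i H_i) − 2 m w_min β. -/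
open scoped BigOperators
noncomputable section

/-- The spectral norm of a real matrix: the operator norm of the induced map on
Euclidean space. -/
def specNorm {n : ℕ} (A : Matrix (Fin n) (Fin n) ℝ) : ℝ :=
  ‖Matrix.toEuclideanCLM (𝕜 := ℝ) A‖

/-- The minimal eigenvalue of a real symmetric matrix, as the infimum of its Rayleigh
quotient over the Euclidean unit sphere. -/
def lamMin {n : ℕ} (A : Matrix (Fin n) (Fin n) ℝ) : ℝ :=
  ⨅ v : Metric.sphere (0 : EuclideanSpace ℝ (Fin n)) 1,
    ∑ i, ∑ j, (v : EuclideanSpace ℝ (Fin n)) i * A i j * (v : EuclideanSpace ℝ (Fin n)) j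

/-- The truncated simplex `Δ_{m,c}`: simplex weights bounded below by `c`. -/
def simplexC (m : ℕ) (c : ℝ) : Set (Fin m → ℝ) :=
  {w ∈ stdSimplex ℝ (Fin m) | ∀ i, c ≤ w i}

lemma quad_eq_inner {n : ℕ} (A : Matrix (Fin n) (Fin n) ℝ) (v : EuclideanSpace ℝ (Fin n)) :
    ∑ i, ∑ j, v i * A i j * v j = inner ℝ v (Matrix.toEuclideanCLM (𝕜 := ℝ) A v) := by
  rw [PiLp.inner_apply]
  refine Finset.sum_congr rfl fun i _ => ?_
  have : (Matrix.toEuclideanCLM (𝕜 := ℝ) A v) i = A.mulVec v i := rfl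
  rw [this, Matrix.mulVec, dotProduct]
  simp [Finset.mul_sum, mul_assoc, RCLike.inner_apply]
  rw [Finset.sum_mul]
  exact Finset.sum_congr rfl fun j _ => by ring

lemma quad_abs_le {n : ℕ} (A : Matrix (Fin n) (Fin n) ℝ) (v : EuclideanSpace ℝ (Fin n))
    (hv : ‖v‖ = 1) : |∑ i, ∑ j, v i * A i j * v j| ≤ specNorm A := by
  rw [quad_eq_inner]
  calc |inner ℝ v (Matrix.toEuclideanCLM (𝕜 := ℝ) A v)|
      ≤ ‖v‖ * ‖Matrix.toEuclideanCLM (𝕜 := ℝ) A v‖ := abs_real_inner_le_norm _ _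
    _ ≤ ‖v‖ * (specNorm A * ‖v‖) := by
        gcongr; exact (Matrix.toEuclideanCLM (𝕜 := ℝ) A).le_opNorm v
    _ = specNorm A := by rw [hv]; ring

lemma quad_sum {n m : ℕ} (w : Fin m → ℝ) (H : Fin m → Matrix (Fin n) (Fin n) ℝ)
    (v : EuclideanSpace ℝ (Fin n)) :
    ∑ i, ∑ j, v i * (∑ k, w k • H k) i j * v j
      = ∑ k, w k * ∑ i, ∑ j, v i * H k i j * v j := by
  have h1 : ∀ i j : Fin n, v i * (∑ k, w k • H k) i j * v j
      = ∑ k, w k * (v i * H k i j * v j) := by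
    intro i j
    simp only [Matrix.sum_apply, Matrix.smul_apply, smul_eq_mul, Finset.sum_mul, Finset.mul_sum]
    exact Finset.sum_congr rfl fun k _ => by ring
  calc ∑ i, ∑ j, v i * (∑ k, w k • H k) i j * v j
      = ∑ i, ∑ j, ∑ k, w k * (v i * H k i j * v j) := by
        exact Finset.sum_congr rfl fun i _ => Finset.sum_congr rfl fun j _ => h1 i j
    _ = ∑ i, ∑ k, ∑ j, w k * (v i * H k i j * v j) :=
        Finset.sum_congr rfl fun i _ => Finset.sum_comm
    _ = ∑ k, ∑ i, ∑ j, w k * (v i * H k i j * v j) := Finset.sum_comm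
    _ = ∑ k, w k * ∑ i, ∑ j, v i * H k i j * v j := by
        refine Finset.sum_congr rfl fun k _ => ?_
        rw [Finset.mul_sum]
        exact Finset.sum_congr rfl fun i _ => by rw [Finset.mul_sum]


/-- Continuity of the maximal minimal-eigenvalue under truncation of the simplex:
maximizing over `Δ_{m,w_min}` instead of `Δ_m` loses at most `2 m w_min β`. -/
theorem wmin_minimal_eigenvalue {n m : ℕ} (hn : 0 < n) (hm : 0 < m)
    (H : Fin m → Matrix (Fin n) (Fin n) ℝ) (β : ℝ) (hβ : 0 ≤ β)
    (hH : ∀ i, (H i).IsSymm) (hHβ : ∀ i, specNorm (H i) ≤ β)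
    (wmin : ℝ) (hwmin : 0 < wmin) (hwmin' : wmin ≤ 1 / m)
    (wstar : Fin m → ℝ) (hwstar : wstar ∈ stdSimplex ℝ (Fin m))
    (hwstar_max : ∀ w ∈ stdSimplex ℝ (Fin m),
      lamMin (∑ i, w i • H i) ≤ lamMin (∑ i, wstar i • H i))
    (what : Fin m → ℝ) (hwhat : what ∈ simplexC m wmin)
    (hwhat_max : ∀ w ∈ simplexC m wmin,
      lamMin (∑ i, w i • H i) ≤ lamMin (∑ i, what i • H i)) :
    lamMin (∑ i, wstar i • H i) - 2 * m * wmin * β ≤ lamMin (∑ i, what i • H i) := by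
  -- abbreviation for the quadratic form
  set q : Matrix (Fin n) (Fin n) ℝ → EuclideanSpace ℝ (Fin n) → ℝ :=
    fun A v => ∑ i, ∑ j, v i * A i j * v j with hq
  -- the sphere is nonempty
  have hne : Nonempty (Metric.sphere (0 : EuclideanSpace ℝ (Fin n)) 1) := by
    refine ⟨⟨EuclideanSpace.single ⟨0, hn⟩ (1 : ℝ), ?_⟩⟩
    simp [EuclideanSpace.norm_single]
  -- per-matrix quadratic form bounds
  have hqH : ∀ k, ∀ v : Metric.sphere (0 : EuclideanSpace ℝ (Fin n)) 1,
      |q (H k) (v : EuclideanSpace ℝ (Fin n))| ≤ β := by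
    intro k v
    have hv : ‖(v : EuclideanSpace ℝ (Fin n))‖ = 1 := by
      have := v.2
      simpa [mem_sphere_iff_norm] using this
    exact le_trans (quad_abs_le (H k) _ hv) (hHβ k)
  have hmw : (m : ℝ) * wmin ≤ 1 := by
    have hm0 : (0:ℝ) < m := by exact_mod_cast hm
    rw [le_div_iff₀ hm0] at hwmin'
    linarith
  have hmw0 : 0 ≤ (m : ℝ) * wmin := by positivity
  -- bound on quadratic form of any simplex combination
  have hqcomb : ∀ w ∈ stdSimplex ℝ (Fin m), ∀ v : Metric.sphere (0 : EuclideanSpace ℝ (Fin n)) 1,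
      |q (∑ k, w k • H k) (v : EuclideanSpace ℝ (Fin n))| ≤ β := by
    intro w hw v
    rw [hq]
    simp only
    rw [quad_sum]
    calc |∑ k, w k * ∑ i, ∑ j, (v:EuclideanSpace ℝ (Fin n)) i * H k i j * (v:EuclideanSpace ℝ (Fin n)) j|
        ≤ ∑ k, |w k * ∑ i, ∑ j, (v:EuclideanSpace ℝ (Fin n)) i * H k i j * (v:EuclideanSpace ℝ (Fin n)) j| :=
          Finset.abs_sum_le_sum_abs _ _
      _ ≤ ∑ k, w k * β := by
          refine Finset.sum_le_sum fun k _ => ?_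
          rw [abs_mul, abs_of_nonneg (hw.1 k)]
          exact mul_le_mul_of_nonneg_left (hqH k v) (hw.1 k)
      _ = β := by rw [← Finset.sum_mul, hw.2, one_mul]
  -- lamMin star value facts
  set L := lamMin (∑ i, wstar i • H i) with hL
  have hbdd : BddBelow (Set.range fun v : Metric.sphere (0 : EuclideanSpace ℝ (Fin n)) 1 =>
      q (∑ k, wstar k • H k) (v : EuclideanSpace ℝ (Fin n))) := by
    refine ⟨-β, fun x hx => ?_⟩
    obtain ⟨v, rfl⟩ := hx
    have := hqcomb wstar hwstar v
    exact neg_le_of_abs_le this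
  have hLle : ∀ v : Metric.sphere (0 : EuclideanSpace ℝ (Fin n)) 1,
      L ≤ q (∑ k, wstar k • H k) (v : EuclideanSpace ℝ (Fin n)) := fun v => ciInf_le hbdd v
  have hLβ : L ≤ β := by
    obtain ⟨v⟩ := hne
    exact le_trans (hLle v) (le_of_abs_le (hqcomb wstar hwstar v))
  -- the shifted weight vector
  set w' : Fin m → ℝ := fun i => (1 - m * wmin) * wstar i + wmin with hw'
  have hw'mem : w' ∈ simplexC m wmin := by
    refine ⟨⟨fun i => ?_, ?_⟩, fun i => ?_⟩
    · have h := hwstar.1 i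
      simp only [hw']
      nlinarith [hmw]
    · simp only [hw']
      rw [Finset.sum_add_distrib, ← Finset.mul_sum, hwstar.2, Finset.sum_const,
        Finset.card_univ, Fintype.card_fin, nsmul_eq_mul]
      ring
    · have h := hwstar.1 i
      simp only [hw']
      nlinarith [hmw]
  -- key bound: lamMin of w'-combination ≥ L - 2 m wmin β
  have hkey : L - 2 * m * wmin * β ≤ lamMin (∑ i, w' i • H i) := by
    rw [lamMin]
    refine le_ciInf fun v => ?_
    have hsplit : (∑ i, ∑ j, (v:EuclideanSpace ℝ (Fin n)) i * (∑ k, w' k • H k) i j * (v:EuclideanSpace ℝ (Fin n)) j)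
        = (1 - m * wmin) * q (∑ k, wstar k • H k) (v : EuclideanSpace ℝ (Fin n))
          + wmin * ∑ k, q (H k) (v : EuclideanSpace ℝ (Fin n)) := by
      rw [quad_sum]
      simp only [hq]
      rw [quad_sum, Finset.mul_sum, Finset.mul_sum, ← Finset.sum_add_distrib]
      refine Finset.sum_congr rfl fun k _ => ?_
      rw [hw']
      ring
    rw [hsplit]
    have h1 : L ≤ q (∑ k, wstar k • H k) (v : EuclideanSpace ℝ (Fin n)) := hLle v
    have h2 : -(m * β) ≤ ∑ k, q (H k) (v : EuclideanSpace ℝ (Fin n)) := by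
      have : ∑ k : Fin m, -β ≤ ∑ k, q (H k) (v : EuclideanSpace ℝ (Fin n)) :=
        Finset.sum_le_sum fun k _ => neg_le_of_abs_le (hqH k v)
      simpa using this
    nlinarith [hwmin.le, hmw, hmw0]
  exact le_trans hkey (hwhat_max w' hw'mem)
end
end

section
/- Let f_1, …, f_m : ℝⁿ → ℝ be convex differentiable functions sharing a common minimizer x⋆ (x⋆ minimizes every f_i), and let w̄ ∈ ℝ^m with w̄ ≥ 0 componentwise be such that the weighted function f_{w̄} is β-smooth. Then for every x ∈ ℝⁿ: sup over w ∈ ℝ^m with w ≥ 0 componentwise of [2(f_w(x) − f_w(x⋆)) − ‖∇f_w(x)‖²] is at least (f_{w̄}(x) − f_{w̄}(x⋆))/(2β). -/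
open scoped BigOperators
open RealInnerProductSpace
noncomputable section

abbrev E (n : ℕ) := EuclideanSpace ℝ (Fin n)

/-- `f` is `β`-smooth. -/
def IsBetaSmooth {n : ℕ} (β : ℝ) (f : E n → ℝ) : Prop :=
  ∀ x y : E n, f y ≤ f x + ⟪gradient f x, y - x⟫ + β / 2 * ‖y - x‖ ^ 2

open InnerProductSpace in
lemma grad_sum_aux {n m : ℕ} (f : Fin m → E n → ℝ) (hdiff : ∀ i, Differentiable ℝ (f i))
    (w : Fin m → ℝ) (x : E n) :
    HasGradientAt (fun y => ∑ i, w i * f i y) (∑ i, w i • gradient (f i) x) x := by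
  rw [hasGradientAt_iff_hasFDerivAt, map_sum]
  have : ∀ i : Fin m, HasFDerivAt (fun y => w i * f i y)
      (toDual ℝ (E n) (w i • gradient (f i) x)) x := by
    intro i
    have h1 : HasFDerivAt (f i) (toDual ℝ (E n) (gradient (f i) x)) x :=
      ((hdiff i x).hasGradientAt).hasFDerivAt
    have := h1.const_mul (w i)
    simpa [map_smul, smul_eq_mul] using this
  exact HasFDerivAt.fun_sum (fun i _ => this i)

open InnerProductSpace in
lemma conv_grad_aux {n : ℕ} (f : E n → ℝ) (hconv : ConvexOn ℝ Set.univ f)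
    (hdiff : Differentiable ℝ f) (x y : E n) :
    ⟪gradient f x, y - x⟫ ≤ f y - f x := by
  set g : ℝ → ℝ := f ∘ (AffineMap.lineMap x y : ℝ →ᵃ[ℝ] E n) with hg
  have hgc : ConvexOn ℝ Set.univ g := by
    have := hconv.comp_affineMap (AffineMap.lineMap x y : ℝ →ᵃ[ℝ] E n)
    simpa using this
  have hd : HasDerivAt g (⟪gradient f x, y - x⟫) 0 := by
    have hline : HasDerivAt (fun t : ℝ => (AffineMap.lineMap x y : ℝ →ᵃ[ℝ] E n) t) (y - x) 0 := by
      simp only [AffineMap.coe_lineMap]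
      simpa using ((hasDerivAt_id (0:ℝ)).smul_const (y - x)).add_const x
    have hf' : HasFDerivAt f (toDual ℝ (E n) (gradient f x))
        ((AffineMap.lineMap x y : ℝ →ᵃ[ℝ] E n) (0:ℝ)) := by
      simpa using ((hdiff _).hasGradientAt).hasFDerivAt
    have := hf'.comp_hasDerivAt 0 hline
    simpa [toDual_apply_apply] using this
  have h := hgc.le_slope_of_hasDerivAt (Set.mem_univ (0:ℝ)) (Set.mem_univ (1:ℝ)) one_pos hd
  simpa [hg, slope_def_field, AffineMap.lineMap_apply_one, AffineMap.lineMap_apply_zero] using h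

/-- Lower bound on the `PAMOO` objective: for convex differentiable `fᵢ` sharing a common
minimizer `x⋆`, and any nonnegative weight vector `w̄` for which `f_{w̄}` is `β`-smooth,
`sup_{w ≥ 0} [2(f_w(x) − f_w(x⋆)) − ‖∇f_w(x)‖²] ≥ (f_{w̄}(x) − f_{w̄}(x⋆))/(2β)`. -/
theorem pamoo_objective_lower_bound {n m : ℕ} (f : Fin m → E n → ℝ) (β : ℝ) (hβ : 0 < β)
    (hconv : ∀ i, ConvexOn ℝ Set.univ (f i))
    (hdiff : ∀ i, Differentiable ℝ (f i))
    (xstar : E n) (hopt : ∀ i, ∀ y : E n, f i xstar ≤ f i y)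
    (wbar : Fin m → ℝ) (hwbar : ∀ i, 0 ≤ wbar i)
    (hsmooth : IsBetaSmooth β (fun y => ∑ i, wbar i * f i y)) :
    ∀ x : E n,
      ((∑ i, wbar i * f i x) - ∑ i, wbar i * f i xstar) / (2 * β) ≤
        ⨆ w : {w : Fin m → ℝ // ∀ i, 0 ≤ w i},
          (2 * ((∑ i, (w : Fin m → ℝ) i * f i x) - ∑ i, (w : Fin m → ℝ) i * f i xstar)
            - ‖∑ i, (w : Fin m → ℝ) i • gradient (f i) x‖ ^ 2) := by
  intro x
  set g : E n → ℝ := fun y => ∑ i, wbar i * f i y with hgdef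
  set G : E n := ∑ i, wbar i • gradient (f i) x with hGdef
  have hgx : HasGradientAt g G x := grad_sum_aux f hdiff wbar x
  have hG : gradient g x = G :=
    HasGradientAt.unique ((hgx.hasFDerivAt.differentiableAt).hasGradientAt) hgx
  have gstar_le : ∀ y : E n, g xstar ≤ g y := by
    intro y
    apply Finset.sum_le_sum
    intro i _
    exact mul_le_mul_of_nonneg_left (hopt i y) (hwbar i)
  -- smoothness consequence: ‖G‖² ≤ 2β (g x − g x⋆)
  have hβ' : β * β⁻¹ = 1 := mul_inv_cancel₀ hβ.ne'
  have hGsq : ‖G‖ ^ 2 ≤ 2 * β * (g x - g xstar) := by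
    have h1 := hsmooth x (x - β⁻¹ • G)
    rw [hG] at h1
    have e1 : (x - β⁻¹ • G) - x = -(β⁻¹ • G) := by abel
    rw [e1] at h1
    have e2 : ⟪G, -(β⁻¹ • G)⟫ = -(β⁻¹ * ‖G‖ ^ 2) := by
      rw [inner_neg_right, real_inner_smul_right, real_inner_self_eq_norm_sq]
    have e3 : ‖-(β⁻¹ • G)‖ ^ 2 = β⁻¹ ^ 2 * ‖G‖ ^ 2 := by
      rw [norm_neg, norm_smul, mul_pow]
      congr 1
      rw [Real.norm_eq_abs, sq_abs]
    rw [e2, e3] at h1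
    have h2 := gstar_le (x - β⁻¹ • G)
    have key : β⁻¹ * ‖G‖ ^ 2 - β / 2 * (β⁻¹ ^ 2 * ‖G‖ ^ 2) = ‖G‖ ^ 2 / (2 * β) := by
      field_simp; ring
    have h3 : ‖G‖ ^ 2 / (2 * β) ≤ g x - g xstar := by linarith
    rw [div_le_iff₀ (by positivity)] at h3
    linarith
  -- boundedness of the objective
  have hbdd : BddAbove (Set.range fun w : {w : Fin m → ℝ // ∀ i, 0 ≤ w i} =>
      (2 * ((∑ i, (w : Fin m → ℝ) i * f i x) - ∑ i, (w : Fin m → ℝ) i * f i xstar)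
        - ‖∑ i, (w : Fin m → ℝ) i • gradient (f i) x‖ ^ 2)) := by
    refine ⟨‖x - xstar‖ ^ 2, ?_⟩
    rintro _ ⟨w, rfl⟩
    dsimp only
    set s : E n := ∑ i, (w : Fin m → ℝ) i • gradient (f i) x with hs
    have hA : (∑ i, (w : Fin m → ℝ) i * f i x) - (∑ i, (w : Fin m → ℝ) i * f i xstar)
        ≤ ⟪s, x - xstar⟫ := by
      rw [hs, sum_inner, ← Finset.sum_sub_distrib]
      apply Finset.sum_le_sum
      intro i _
      rw [real_inner_smul_left]
      have hc := conv_grad_aux (f i) (hconv i) (hdiff i) x xstar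
      have h' : f i x - f i xstar ≤ ⟪gradient (f i) x, x - xstar⟫ := by
        have e : xstar - x = -(x - xstar) := by abel
        rw [e, inner_neg_right] at hc
        linarith
      have := mul_le_mul_of_nonneg_left h' (w.2 i)
      linarith [this, (mul_sub ((w : Fin m → ℝ) i) (f i x) (f i xstar)).symm.le]
    have hn : ‖(x - xstar) - s‖ ^ 2 = ‖x - xstar‖ ^ 2 - 2 * ⟪x - xstar, s⟫ + ‖s‖ ^ 2 := by
      rw [norm_sub_sq_real]
    have hpos : 0 ≤ ‖(x - xstar) - s‖ ^ 2 := sq_nonneg _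
    have hcomm : ⟪s, x - xstar⟫ = ⟪x - xstar, s⟫ := real_inner_comm _ _
    linarith
  -- evaluate at w₀ = w̄ / (2β)
  set c : ℝ := (2 * β)⁻¹ with hc
  have hc0 : 0 ≤ c := by positivity
  have hc1 : c * (2 * β) = 1 := inv_mul_cancel₀ (by positivity)
  set w₀ : {w : Fin m → ℝ // ∀ i, 0 ≤ w i} :=
    ⟨fun i => wbar i * c, fun i => mul_nonneg (hwbar i) hc0⟩ with hw₀
  have e1 : ∑ i, ((w₀ : Fin m → ℝ)) i * f i x = c * g x := by
    rw [hgdef]; simp only [Finset.mul_sum]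
    apply Finset.sum_congr rfl; intros; ring
  have e2 : ∑ i, ((w₀ : Fin m → ℝ)) i * f i xstar = c * g xstar := by
    simp only [hgdef, Finset.mul_sum]
    apply Finset.sum_congr rfl; intros; ring
  have e3 : ∑ i, ((w₀ : Fin m → ℝ)) i • gradient (f i) x = c • G := by
    rw [hGdef, Finset.smul_sum]
    apply Finset.sum_congr rfl; intros
    rw [smul_smul, mul_comm]
  have e4 : ‖c • G‖ ^ 2 = c ^ 2 * ‖G‖ ^ 2 := by
    rw [norm_smul, mul_pow, Real.norm_eq_abs, sq_abs]
  have hval : (g x - g xstar) / (2 * β) ≤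
      2 * ((∑ i, ((w₀ : Fin m → ℝ)) i * f i x) - ∑ i, ((w₀ : Fin m → ℝ)) i * f i xstar)
        - ‖∑ i, ((w₀ : Fin m → ℝ)) i • gradient (f i) x‖ ^ 2 := by
    rw [e1, e2, e3, e4, div_eq_mul_inv, ← hc]
    nlinarith [hGsq, hc1, sq_nonneg c, mul_le_mul_of_nonneg_left hGsq (sq_nonneg c)]
  exact le_trans hval (le_ciSup hbdd w₀)
end
end
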